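/- (Siegel-type lemma) Let Λ₁,…,Λ_h ∈ (ℂ*)ⁿ with min_{p,k} |λ_{k,p}| = 4θ for some θ > 0 with 4θ ≤ 1, and let ω(m) ≤ 2 denote the simultaneous small-divisor function. Suppose Q > L are multi-indices (Q − L ∈ ℕⁿ \ {0}) with Q, L, Q−L all not simultaneously resonant, and suppose ε_Q < θ ω(m), ε_L < θ ω(m), and the minimizing coordinate indices coincide: i_Q = i_L. Then |Q − L| ≥ m. -/

import Mathlib

/-- `ε_Q = min_{1≤j≤n} max_{1≤k≤h} |Λ_k^Q − λ_{k,j}|` (here `h+2` germs in dimension `n+1`). -/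
noncomputable def simEps {n h : ℕ} (Λ : Fin (h + 2) → Fin (n + 1) → ℂ)
    (Q : Fin (n + 1) → ℕ) : ℝ :=
  Finset.univ.inf' Finset.univ_nonempty fun j =>
    Finset.univ.sup' Finset.univ_nonempty fun k =>
      ‖(∏ i, Λ k i ^ Q i) - Λ k j‖

/-- `Q` is a simultaneous resonance: `Λ_k^Q = λ_{k,j}` for every `k` and `j`. -/
def SimRes {n h : ℕ} (Λ : Fin (h + 2) → Fin (n + 1) → ℂ) (Q : Fin (n + 1) → ℕ) : Prop :=
  ∀ k j, (∏ i, Λ k i ^ Q i) = Λ k j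

private lemma simEps_le_of_bound {n h : ℕ} (Λ : Fin (h + 2) → Fin (n + 1) → ℂ)
    (P : Fin (n + 1) → ℕ) (i : Fin (n + 1)) (c : ℝ)
    (hc : ∀ k, ‖(∏ i', Λ k i' ^ P i') - Λ k i‖ ≤ c) :
    simEps Λ P ≤ c :=
  le_trans (Finset.inf'_le _ (Finset.mem_univ i)) (Finset.sup'_le _ _ fun k _ => hc k)

private lemma simEps_nonneg {n h : ℕ} (Λ : Fin (h + 2) → Fin (n + 1) → ℂ)
    (P : Fin (n + 1) → ℕ) : 0 ≤ simEps Λ P := by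
  apply Finset.le_inf'
  intro j _
  exact le_trans (norm_nonneg _)
    (Finset.le_sup' (f := fun k => ‖(∏ i, Λ k i ^ P i) - Λ k j‖)
      (Finset.mem_univ (0 : Fin (h + 2))))

/-- Siegel-type lemma: with `4θ = min_{k,p} |λ_{k,p}| ≤ 1`, `ω` the
simultaneous small-divisor function (non-increasing, `ω ≤ 2`, and `ω m ≤ ε_P` for every
admissible `P` with `2 ≤ |P| ≤ m`), if `Q > L`, the multi-indices `Q`, `L`, `Q − L` are
not simultaneously resonant, `ε_Q < θ·ω(m)`, `ε_L < θ·ω(m)`, and the minimizing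
coordinate indices coincide (`i_Q = i_L = i`), then `|Q − L| ≥ m`. -/
theorem stmt_9 (n h m : ℕ) (hm : 2 ≤ m)
    (Λ : Fin (h + 2) → Fin (n + 1) → ℂ) (hΛ : ∀ k p, Λ k p ≠ 0)
    (θ : ℝ) (hθpos : 0 < θ)
    (hθmin : ∀ k p, 4 * θ ≤ ‖Λ k p‖)
    (hθattain : ∃ k p, 4 * θ = ‖Λ k p‖)
    (hθ1 : 4 * θ ≤ 1)
    (ω : ℕ → ℝ)
    (hωanti : ∀ a b : ℕ, a ≤ b → ω b ≤ ω a)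
    (hω2 : ∀ m' : ℕ, ω m' ≤ 2)
    (hωle : ∀ (m' : ℕ) (P : Fin (n + 1) → ℕ), 2 ≤ ∑ i, P i → ∑ i, P i ≤ m' →
      ¬ SimRes Λ P → ω m' ≤ simEps Λ P)
    (Q L : Fin (n + 1) → ℕ) (hLQ : ∀ i, L i ≤ Q i) (hne : L ≠ Q)
    (hQres : ¬ SimRes Λ Q) (hLres : ¬ SimRes Λ L)
    (hQLres : ¬ SimRes Λ (fun i => Q i - L i))
    (i : Fin (n + 1))
    (hiQ : ∀ k, ‖(∏ i', Λ k i' ^ Q i') - Λ k i‖ ≤ simEps Λ Q)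
    (hiL : ∀ k, ‖(∏ i', Λ k i' ^ L i') - Λ k i‖ ≤ simEps Λ L)
    (hεQ : simEps Λ Q < θ * ω m) (hεL : simEps Λ L < θ * ω m) :
    m ≤ ∑ i', (Q i' - L i') := by
  by_contra hcon
  push_neg at hcon
  set D : Fin (n + 1) → ℕ := fun i' => Q i' - L i' with hDdef
  have hDm : (∑ i', D i') < m := hcon
  have hQeq : ∀ j, Q j = L j + D j := fun j => by
    have := hLQ j; simp only [hDdef]; omega
  have hprodQ : ∀ k, (∏ i', Λ k i' ^ Q i') =
      (∏ i', Λ k i' ^ L i') * ∏ i', Λ k i' ^ D i' := by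
    intro k
    rw [← Finset.prod_mul_distrib]
    exact Finset.prod_congr rfl fun j _ => by rw [← pow_add, ← hQeq j]
  have hS1 : 1 ≤ ∑ i', D i' := by
    obtain ⟨j, hj⟩ := Function.ne_iff.mp hne
    have h1 : 1 ≤ D j := by have := hLQ j; simp only [hDdef]; omega
    exact le_trans h1 (Finset.single_le_sum (fun j _ => Nat.zero_le _) (Finset.mem_univ j))
  have hωm2 : ω m ≤ 2 := hω2 m
  have hωpos : 0 < ω m := by
    have h0 := simEps_nonneg Λ Q
    nlinarith
  have hεQ2 : simEps Λ Q < 2 * θ := by nlinarith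
  have hεL2 : simEps Λ L < 2 * θ := by nlinarith
  have hBlb : ∀ k, ‖Λ k i‖ ≤ 2 * ‖∏ i', Λ k i' ^ L i'‖ := by
    intro k
    have h1 := hiL k
    have h3 := abs_norm_sub_norm_le (∏ i', Λ k i' ^ L i') (Λ k i)
    have h4 := hθmin k i
    have h5 := neg_le_abs (‖∏ i', Λ k i' ^ L i'‖ - ‖Λ k i‖)
    linarith
  -- product formula for D + e_i
  have hPprod : ∀ k, (∏ j, Λ k j ^ (D j + if j = i then 1 else 0)) =
      (∏ i', Λ k i' ^ D i') * Λ k i := by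
    intro k
    have h1 : (∏ j, Λ k j ^ (D j + if j = i then 1 else 0)) =
        (∏ j, Λ k j ^ D j) * ∏ j, Λ k j ^ (if j = i then 1 else 0) := by
      rw [← Finset.prod_mul_distrib]
      exact Finset.prod_congr rfl fun j _ => pow_add _ _ _
    rw [h1]
    congr 1
    simp [pow_ite]
  by_cases hP : SimRes Λ (fun j => D j + if j = i then 1 else 0)
  · -- degenerate case: all eigenvalues of each germ coincide and Λ^D = 1
    have hC1 : ∀ k, (∏ i', Λ k i' ^ D i') = 1 := by
      intro k
      have hki := hP k i
      rw [hPprod k] at hki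
      exact mul_right_cancel₀ (hΛ k i) (by rw [hki, one_mul])
    have hall : ∀ k j, Λ k j = Λ k i := by
      intro k j
      have hkj := hP k j
      rw [hPprod k, hC1 k, one_mul] at hkj
      exact hkj.symm
    have hpow : ∀ (k) (E : Fin (n + 1) → ℕ),
        (∏ j, Λ k j ^ E j) = Λ k i ^ (∑ j, E j) := by
      intro k E
      rw [← Finset.prod_pow_eq_pow_sum]
      exact Finset.prod_congr rfl fun j _ => by rw [hall k j]
    have hμ : ∀ k, Λ k i ^ (∑ j, D j) = 1 := by
      intro k
      rw [← hpow k D]; exact hC1 k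
    have hS2 : 2 ≤ ∑ j, D j := by
      by_contra hS2
      have hSeq : ∑ j, D j = 1 := by omega
      apply hQLres
      intro k j
      have hμ1 : Λ k i = 1 := by have := hμ k; rwa [hSeq, pow_one] at this
      show (∏ i', Λ k i' ^ D i') = Λ k j
      rw [hpow k D, hall k j, hμ1, one_pow]
    set r : ℕ := (∑ j, Q j) % (∑ j, D j) with hrdef
    have hrlt : r < ∑ j, D j := Nat.mod_lt _ (by omega)
    set s : ℕ := if 2 ≤ r then r else r + ∑ j, D j with hsdef
    have hs2 : 2 ≤ s := by rw [hsdef]; split_ifs with hr <;> omega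
    have hsm : s ≤ m := by rw [hsdef]; split_ifs with hr <;> omega
    have hμs : ∀ k, Λ k i ^ s = Λ k i ^ (∑ j, Q j) := by
      intro k
      have h1 : Λ k i ^ (∑ j, Q j) = Λ k i ^ r := by
        conv_lhs => rw [← Nat.div_add_mod (∑ j, Q j) (∑ j, D j)]
        rw [pow_add, pow_mul, hμ k, one_pow, one_mul]
      have h2 : Λ k i ^ s = Λ k i ^ r := by
        rw [hsdef]
        split_ifs with hr
        · rfl
        · rw [pow_add, hμ k, mul_one]
      rw [h1, h2]
    have hprodP' : ∀ k, (∏ j, Λ k j ^ (if j = i then s else 0)) = ∏ i', Λ k i' ^ Q i' := by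
      intro k
      rw [hpow k (fun j => if j = i then s else 0), hpow k Q]
      have : (∑ j, if j = i then s else 0) = s := by simp
      rw [this, hμs k]
    have hsumP' : (∑ j, if j = i then s else 0) = s := by simp
    have hnres : ¬ SimRes Λ (fun j => if j = i then s else 0) := by
      intro hres
      apply hQres
      intro k j
      have := hres k j
      rwa [hprodP' k] at this
    have hω' := hωle m (fun j => if j = i then s else 0) (by rw [hsumP']; exact hs2)
      (by rw [hsumP']; exact hsm) hnres
    have hle : simEps Λ (fun j => if j = i then s else 0) ≤ simEps Λ Q := by
      apply simEps_le_of_bound _ _ i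
      intro k
      rw [hprodP' k]
      exact hiQ k
    nlinarith
  · -- main case: apply ω to P = D + e_i
    have hsumP : (∑ j, (D j + if j = i then 1 else 0)) = (∑ j, D j) + 1 := by
      rw [Finset.sum_add_distrib]
      congr 1
      simp
    have hbound : ∀ k, ‖(∏ j, Λ k j ^ (D j + if j = i then 1 else 0)) - Λ k i‖
        ≤ 2 * (simEps Λ Q + simEps Λ L) := by
      intro k
      have hAB : ‖(∏ i', Λ k i' ^ Q i') - (∏ i', Λ k i' ^ L i')‖
          ≤ simEps Λ Q + simEps Λ L := by
        have h1 := norm_sub_le_norm_sub_add_norm_sub (∏ i', Λ k i' ^ Q i') (Λ k i) (∏ i', Λ k i' ^ L i')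
        have h2 : ‖Λ k i - ∏ i', Λ k i' ^ L i'‖
            = ‖(∏ i', Λ k i' ^ L i') - Λ k i‖ := norm_sub_rev _ _
        have h3 := hiQ k
        have h4 := hiL k
        linarith
      have hfac : (∏ j, Λ k j ^ (D j + if j = i then 1 else 0)) - Λ k i
          = Λ k i * ((∏ i', Λ k i' ^ D i') - 1) := by
        rw [hPprod k]; ring
      have hfac2 : (∏ i', Λ k i' ^ L i') * ((∏ i', Λ k i' ^ D i') - 1)
          = (∏ i', Λ k i' ^ Q i') - (∏ i', Λ k i' ^ L i') := by
        rw [hprodQ k]; ring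
      have habs2 : ‖∏ i', Λ k i' ^ L i'‖
          * ‖(∏ i', Λ k i' ^ D i') - 1‖ ≤ simEps Λ Q + simEps Λ L := by
        rw [← norm_mul, hfac2]; exact hAB
      have hC0 : (0:ℝ) ≤ ‖(∏ i', Λ k i' ^ D i') - 1‖ := norm_nonneg _
      calc ‖(∏ j, Λ k j ^ (D j + if j = i then 1 else 0)) - Λ k i‖
          = ‖Λ k i‖ * ‖(∏ i', Λ k i' ^ D i') - 1‖ := by
            rw [hfac, norm_mul]
        _ ≤ (2 * ‖∏ i', Λ k i' ^ L i'‖)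
            * ‖(∏ i', Λ k i' ^ D i') - 1‖ :=
            mul_le_mul_of_nonneg_right (hBlb k) hC0
        _ ≤ 2 * (simEps Λ Q + simEps Λ L) := by
            have := habs2; nlinarith
    have hω' := hωle m (fun j => D j + if j = i then 1 else 0)
      (by rw [hsumP]; omega) (by rw [hsumP]; omega) hP
    have hle := simEps_le_of_bound Λ (fun j => D j + if j = i then 1 else 0) i
      (2 * (simEps Λ Q + simEps Λ L)) hbound
    nlinarith
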